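/- arXiv:2210.11368 — 2 statements merged into one kernel-verified Lean document; each statement's English description precedes it below -/
import Mathlib

section
/- Explicit form of the Sinkhorn updates: let p, q ∈ S_n(1) have strictly positive entries, γ > 0, and f(u,v) := γ(1^T B(u,v) 1 − ⟨u,p⟩ − ⟨v,q⟩). Then for every fixed v ∈ ℝ^n, the function u' ↦ f(u',v) has the unique minimizer u' = u + ln p − ln(B(u,v)1) (componentwise, for any u ∈ ℝ^n), and for every fixed u ∈ ℝ^n, the function v' ↦ f(u,v') has the unique minimizer v' = v + ln q − ln(B(u,v)^T 1) (componentwise, for any v ∈ ℝ^n). -/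
open Finset

/-- `B(u,v)ᵢⱼ = exp(uᵢ + vⱼ − Cᵢⱼ/γ)`. -/
noncomputable def Bmat (n : ℕ) (C : Matrix (Fin n) (Fin n) ℝ) (γ : ℝ)
    (u v : Fin n → ℝ) : Matrix (Fin n) (Fin n) ℝ :=
  Matrix.of fun i j => Real.exp (u i + v j - C i j / γ)

/-- The dual objective `f(u,v) = γ(1ᵀB(u,v)1 − ⟨u,p⟩ − ⟨v,q⟩)`. -/
noncomputable def dualF (n : ℕ) (C : Matrix (Fin n) (Fin n) ℝ) (γ : ℝ)
    (p q : Fin n → ℝ) (u v : Fin n → ℝ) : ℝ :=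
  γ * ((∑ i, ∑ j, Bmat n C γ u v i j) - (∑ i, u i * p i) - (∑ i, v i * q i))

lemma scalar_min (p a t : ℝ) (hp : 0 < p) (ha : 0 < a) :
    Real.exp (Real.log (p / a)) * a - Real.log (p / a) * p ≤ Real.exp t * a - t * p := by
  have h1 : Real.exp (t - Real.log (p / a)) = Real.exp t * a / p := by
    rw [Real.exp_sub, Real.exp_log (div_pos hp ha)]
    field_simp
  have h2 := Real.add_one_le_exp (t - Real.log (p / a))
  rw [h1] at h2
  have h3 : (t - Real.log (p / a) + 1) * p ≤ Real.exp t * a := (le_div_iff₀ hp).mp h2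
  rw [Real.exp_log (div_pos hp ha)]
  have h4 : p / a * a = p := by field_simp
  nlinarith

lemma scalar_strict (p a t : ℝ) (hp : 0 < p) (ha : 0 < a) (hne : t ≠ Real.log (p / a)) :
    Real.exp (Real.log (p / a)) * a - Real.log (p / a) * p < Real.exp t * a - t * p := by
  have h1 : Real.exp (t - Real.log (p / a)) = Real.exp t * a / p := by
    rw [Real.exp_sub, Real.exp_log (div_pos hp ha)]
    field_simp
  have h2 := Real.add_one_lt_exp (sub_ne_zero.mpr hne)
  rw [h1] at h2
  have h3 : (t - Real.log (p / a) + 1) * p < Real.exp t * a := (lt_div_iff₀ hp).mp h2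
  rw [Real.exp_log (div_pos hp ha)]
  have h4 : p / a * a = p := by field_simp
  nlinarith

lemma block_helper (n : ℕ) (a p : Fin n → ℝ) (ha : ∀ i, 0 < a i) (hp : ∀ i, 0 < p i) :
    (∀ u : Fin n → ℝ,
      ∑ i, (Real.exp (Real.log (p i / a i)) * a i - Real.log (p i / a i) * p i)
        ≤ ∑ i, (Real.exp (u i) * a i - u i * p i)) ∧
    (∀ u : Fin n → ℝ,
      (∀ u' : Fin n → ℝ, ∑ i, (Real.exp (u i) * a i - u i * p i)
        ≤ ∑ i, (Real.exp (u' i) * a i - u' i * p i)) →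
      u = fun i => Real.log (p i / a i)) := by
  constructor
  · intro u
    exact Finset.sum_le_sum fun i _ => scalar_min _ _ _ (hp i) (ha i)
  · intro u hu
    funext i
    by_contra hne
    have h1 := hu (fun i => Real.log (p i / a i))
    have h2 : ∑ i, (Real.exp (Real.log (p i / a i)) * a i - Real.log (p i / a i) * p i)
        < ∑ i, (Real.exp (u i) * a i - u i * p i) :=
      Finset.sum_lt_sum (fun j _ => scalar_min _ _ _ (hp j) (ha j))
        ⟨i, Finset.mem_univ i, scalar_strict _ _ _ (hp i) (ha i) hne⟩
    linarith

/-- explicit form of the Sinkhorn updates: the block minimizations of the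
dual objective have unique, explicit solutions. -/
theorem sinkhorn_updates_explicit
    (n : ℕ) (hn : 2 ≤ n) (C : Matrix (Fin n) (Fin n) ℝ)
    (hC : ∀ i j, 0 ≤ C i j) (γ : ℝ) (hγ : 0 < γ)
    (p q : Fin n → ℝ)
    (hp : (∀ i, 0 ≤ p i) ∧ ∑ i, p i = 1) (hppos : ∀ i, 0 < p i)
    (hq : (∀ i, 0 ≤ q i) ∧ ∑ i, q i = 1) (hqpos : ∀ i, 0 < q i) :
    (∀ v u : Fin n → ℝ,
      (∀ u' : Fin n → ℝ,
        dualF n C γ p q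
          (fun i => u i + Real.log (p i) - Real.log (∑ j, Bmat n C γ u v i j)) v
          ≤ dualF n C γ p q u' v) ∧
      (∀ u' : Fin n → ℝ, (∀ u'' : Fin n → ℝ, dualF n C γ p q u' v ≤ dualF n C γ p q u'' v) →
        u' = fun i => u i + Real.log (p i) - Real.log (∑ j, Bmat n C γ u v i j)))
    ∧
    (∀ u v : Fin n → ℝ,
      (∀ v' : Fin n → ℝ,
        dualF n C γ p q u
          (fun j => v j + Real.log (q j) - Real.log (∑ i, Bmat n C γ u v i j))
          ≤ dualF n C γ p q u v') ∧
      (∀ v' : Fin n → ℝ, (∀ v'' : Fin n → ℝ, dualF n C γ p q u v' ≤ dualF n C γ p q u v'') →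
        v' = fun j => v j + Real.log (q j) - Real.log (∑ i, Bmat n C γ u v i j))) := by
  have hn0 : 0 < n := by omega
  constructor
  · -- u-update
    intro v u
    set a : Fin n → ℝ := fun i => ∑ j, Real.exp (v j - C i j / γ) with ha_def
    have hapos : ∀ i, 0 < a i := fun i =>
      Finset.sum_pos (fun j _ => Real.exp_pos _) ⟨⟨0, hn0⟩, Finset.mem_univ _⟩
    have hrow : ∀ (w : Fin n → ℝ) (i : Fin n),
        ∑ j, Bmat n C γ w v i j = Real.exp (w i) * a i := by
      intro w i
      simp only [Bmat, Matrix.of_apply, ha_def, Finset.mul_sum]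
      refine Finset.sum_congr rfl fun j _ => ?_
      rw [← Real.exp_add]
      ring_nf
    have hdual : ∀ w : Fin n → ℝ, dualF n C γ p q w v
        = γ * ((∑ i, (Real.exp (w i) * a i - w i * p i)) - ∑ i, v i * q i) := by
      intro w
      unfold dualF
      rw [show (∑ i, ∑ j, Bmat n C γ w v i j) = ∑ i, Real.exp (w i) * a i from
        Finset.sum_congr rfl fun i _ => hrow w i, Finset.sum_sub_distrib]
    have hstar : (fun i => u i + Real.log (p i) - Real.log (∑ j, Bmat n C γ u v i j))
        = fun i => Real.log (p i / a i) := by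
      funext i
      rw [hrow u i, Real.log_mul (Real.exp_ne_zero _) (ne_of_gt (hapos i)), Real.log_exp,
        Real.log_div (ne_of_gt (hppos i)) (ne_of_gt (hapos i))]
      ring
    obtain ⟨hmin, huniq⟩ := block_helper n a p hapos hppos
    constructor
    · intro u'
      rw [hstar, hdual, hdual]
      have := hmin u'
      nlinarith
    · intro u' hu'
      rw [hstar]
      apply huniq
      intro u''
      have h := hu' u''
      rw [hdual, hdual] at h
      nlinarith [(mul_le_mul_iff_right₀ hγ).mp h]
  · -- v-update
    intro u v
    set a : Fin n → ℝ := fun j => ∑ i, Real.exp (u i - C i j / γ) with ha_def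
    have hapos : ∀ j, 0 < a j := fun j =>
      Finset.sum_pos (fun i _ => Real.exp_pos _) ⟨⟨0, hn0⟩, Finset.mem_univ _⟩
    have hcol : ∀ (w : Fin n → ℝ) (j : Fin n),
        ∑ i, Bmat n C γ u w i j = Real.exp (w j) * a j := by
      intro w j
      simp only [Bmat, Matrix.of_apply, ha_def, Finset.mul_sum]
      refine Finset.sum_congr rfl fun i _ => ?_
      rw [← Real.exp_add]
      ring_nf
    have hdual : ∀ w : Fin n → ℝ, dualF n C γ p q u w
        = γ * ((∑ j, (Real.exp (w j) * a j - w j * q j)) - ∑ i, u i * p i) := by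
      intro w
      unfold dualF
      rw [Finset.sum_comm (f := fun i j => Bmat n C γ u w i j),
        show (∑ j, ∑ i, Bmat n C γ u w i j) = ∑ j, Real.exp (w j) * a j from
          Finset.sum_congr rfl fun j _ => hcol w j, Finset.sum_sub_distrib]
      ring_nf
    have hstar : (fun j => v j + Real.log (q j) - Real.log (∑ i, Bmat n C γ u v i j))
        = fun j => Real.log (q j / a j) := by
      funext j
      rw [hcol v j, Real.log_mul (Real.exp_ne_zero _) (ne_of_gt (hapos j)), Real.log_exp,
        Real.log_div (ne_of_gt (hqpos j)) (ne_of_gt (hapos j))]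
      ring
    obtain ⟨hmin, huniq⟩ := block_helper n a q hapos hqpos
    constructor
    · intro v'
      rw [hstar, hdual, hdual]
      have := hmin v'
      nlinarith
    · intro v' hv'
      rw [hstar]
      apply huniq
      intro v''
      have h := hv' v''
      rw [hdual, hdual] at h
      nlinarith [(mul_le_mul_iff_right₀ hγ).mp h]
end

section
/- Closed form of the Fenchel–Legendre transform of the entropy-regularized OT value: assume C is symmetric, let γ > 0 and let p ∈ S_n(1) have strictly positive entries. Define W*_{γ,p}(u) := max_{q ∈ S_n(1)} {⟨u, q⟩ − W_γ(q, p)}. Then for every u ∈ ℝ^n, W*_{γ,p}(u) = γ Σ_{j=1}^n p_j ln( Σ_{i=1}^n exp((u_i − C_{ji})/γ) ) − γ Σ_{j=1}^n p_j ln p_j. -/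
open Finset

/-- The entropy-regularized OT value `W_γ(q,p)`. -/
noncomputable def Wgamma (n : ℕ) (C : Matrix (Fin n) (Fin n) ℝ) (γ : ℝ)
    (q p : Fin n → ℝ) : ℝ :=
  sInf ((fun π : Matrix (Fin n) (Fin n) ℝ =>
      (∑ i, ∑ j, C i j * π i j) + γ * ∑ i, ∑ j, π i j * Real.log (π i j)) ''
    {π | (∀ i j, 0 ≤ π i j) ∧ (∀ i, ∑ j, π i j = q i) ∧ (∀ j, ∑ i, π i j = p j)})


/-- Per-column Gibbs inequality. -/
lemma key_ineq {n : ℕ} {γ : ℝ} (hγ : 0 < γ) (a x : Fin n → ℝ) (s : ℝ) (hs : 0 < s)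
    (hx : ∀ i, 0 ≤ x i) (hsum : ∑ i, x i = s) :
    ∑ i, (a i * x i - γ * (x i * Real.log (x i))) ≤
      γ * (s * (Real.log (∑ i, Real.exp (a i / γ)) - Real.log s)) := by
  have hne : (Finset.univ : Finset (Fin n)).Nonempty := by
    by_contra h
    rw [Finset.not_nonempty_iff_eq_empty] at h
    rw [h, Finset.sum_empty] at hsum
    linarith
  set Z : ℝ := ∑ i, Real.exp (a i / γ) with hZdef
  have hZ : 0 < Z := Finset.sum_pos (fun i _ => Real.exp_pos _) hne
  have hterm : ∀ i ∈ Finset.univ, a i * x i - γ * (x i * Real.log (x i)) ≤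
      γ * (x i * (Real.log Z - Real.log s)) + γ * (s * Real.exp (a i / γ) / Z - x i) := by
    intro i _
    rcases eq_or_lt_of_le (hx i) with h0 | hpos
    · rw [← h0]
      simp only [mul_zero, zero_mul, Real.log_zero, sub_zero, zero_sub, neg_zero]
      have : 0 ≤ s * Real.exp (a i / γ) / Z :=
        div_nonneg (mul_nonneg hs.le (Real.exp_pos _).le) hZ.le
      have := mul_nonneg hγ.le this
      linarith
    · set y : ℝ := s * Real.exp (a i / γ) / (x i * Z) with hydef
      have hy : 0 < y := div_pos (mul_pos hs (Real.exp_pos _)) (mul_pos hpos hZ)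
      have h1 : Real.log y ≤ y - 1 := Real.log_le_sub_one_of_pos hy
      have hlogy : Real.log y = Real.log s + a i / γ - Real.log (x i) - Real.log Z := by
        rw [hydef, Real.log_div (by positivity) (by positivity), Real.log_mul hs.ne' (Real.exp_pos _).ne',
          Real.log_mul hpos.ne' hZ.ne', Real.log_exp]
        ring
      have hxy : x i * y = s * Real.exp (a i / γ) / Z := by
        rw [hydef]; field_simp
      have h2 : x i * Real.log y ≤ x i * y - x i := by
        have h := mul_le_mul_of_nonneg_left h1 (hx i)
        nlinarith [h]
      rw [hlogy, hxy] at h2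
      have h3 := mul_le_mul_of_nonneg_left h2 hγ.le
      have hγne : γ ≠ 0 := hγ.ne'
      have hfe : γ * (x i * (a i / γ)) = x i * a i := by field_simp
      nlinarith [h3, hfe]
  have hsum1 : ∑ i, (γ * (x i * (Real.log Z - Real.log s)) + γ * (s * Real.exp (a i / γ) / Z - x i))
      = γ * (s * (Real.log Z - Real.log s)) := by
    rw [Finset.sum_add_distrib]
    have e1 : ∑ i, γ * (x i * (Real.log Z - Real.log s)) = γ * (s * (Real.log Z - Real.log s)) := by
      rw [← Finset.mul_sum, ← Finset.sum_mul, hsum]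
    have e2 : ∑ i, γ * (s * Real.exp (a i / γ) / Z - x i) = 0 := by
      rw [← Finset.mul_sum, Finset.sum_sub_distrib, hsum]
      have : ∑ i, s * Real.exp (a i / γ) / Z = s := by
        rw [← Finset.sum_div, ← Finset.mul_sum, ← hZdef, mul_div_assoc, div_self hZ.ne', mul_one]
      rw [this]; ring
    rw [e1, e2, add_zero]
  calc ∑ i, (a i * x i - γ * (x i * Real.log (x i)))
      ≤ ∑ i, (γ * (x i * (Real.log Z - Real.log s)) + γ * (s * Real.exp (a i / γ) / Z - x i)) :=
        Finset.sum_le_sum hterm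
    _ = γ * (s * (Real.log Z - Real.log s)) := hsum1

/-- Per-column equality at the Gibbs distribution. -/
lemma key_eq {n : ℕ} (hn : 0 < n) {γ : ℝ} (hγ : 0 < γ) (a : Fin n → ℝ) (s : ℝ) (hs : 0 < s) :
    ∑ i, (a i * (s * Real.exp (a i / γ) / (∑ k, Real.exp (a k / γ)))
      - γ * ((s * Real.exp (a i / γ) / (∑ k, Real.exp (a k / γ)))
          * Real.log (s * Real.exp (a i / γ) / (∑ k, Real.exp (a k / γ))))) =
      γ * (s * (Real.log (∑ k, Real.exp (a k / γ)) - Real.log s)) := by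
  have hne : (Finset.univ : Finset (Fin n)).Nonempty := ⟨⟨0, hn⟩, Finset.mem_univ _⟩
  set Z : ℝ := ∑ k, Real.exp (a k / γ) with hZdef
  have hZ : 0 < Z := Finset.sum_pos (fun i _ => Real.exp_pos _) hne
  have hterm : ∀ i, a i * (s * Real.exp (a i / γ) / Z)
      - γ * ((s * Real.exp (a i / γ) / Z) * Real.log (s * Real.exp (a i / γ) / Z))
      = γ * ((s * Real.exp (a i / γ) / Z) * (Real.log Z - Real.log s)) := by
    intro i
    have hlog : Real.log (s * Real.exp (a i / γ) / Z)
        = Real.log s + a i / γ - Real.log Z := by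
      rw [Real.log_div (by positivity) hZ.ne', Real.log_mul hs.ne' (Real.exp_pos _).ne',
        Real.log_exp]
    rw [hlog]
    field_simp
    ring
  simp_rw [hterm]
  rw [← Finset.mul_sum, ← Finset.sum_mul]
  have : ∑ i, s * Real.exp (a i / γ) / Z = s := by
    rw [← Finset.sum_div, ← Finset.mul_sum, ← hZdef, mul_div_assoc, div_self hZ.ne', mul_one]
  rw [this]

/-- closed form of the Fenchel–Legendre transform of the
entropy-regularized OT value: the maximum defining `W*_{γ,p}(u)` is attained and equals
`γ Σ_j p_j ln(Σ_i exp((u_i − C_{ji})/γ)) − γ Σ_j p_j ln p_j`. -/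
theorem fenchel_transform_closed_form
    (n : ℕ) (hn : 2 ≤ n) (C : Matrix (Fin n) (Fin n) ℝ)
    (hC : ∀ i j, 0 ≤ C i j) (hCsym : ∀ i j, C i j = C j i)
    (γ : ℝ) (hγ : 0 < γ)
    (p : Fin n → ℝ)
    (hp : (∀ i, 0 ≤ p i) ∧ ∑ i, p i = 1) (hppos : ∀ i, 0 < p i) :
    ∀ u : Fin n → ℝ,
      IsGreatest
        ((fun q : Fin n → ℝ => (∑ i, u i * q i) - Wgamma n C γ q p) ''
          {q | (∀ i, 0 ≤ q i) ∧ ∑ i, q i = 1})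
        (γ * (∑ j, p j * Real.log (∑ i, Real.exp ((u i - C j i) / γ)))
          - γ * ∑ j, p j * Real.log (p j)) := by
  intro u
  have hn0 : 0 < n := by omega
  set Z : Fin n → ℝ := fun j => ∑ i, Real.exp ((u i - C i j) / γ) with hZdef
  have hZpos : ∀ j, 0 < Z j := fun j =>
    Finset.sum_pos (fun i _ => Real.exp_pos _) ⟨⟨0, hn0⟩, Finset.mem_univ _⟩
  set T : ℝ := γ * ∑ j, p j * (Real.log (Z j) - Real.log (p j)) with hTdef
  -- the stated value equals T
  have hTval : γ * (∑ j, p j * Real.log (∑ i, Real.exp ((u i - C j i) / γ)))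
      - γ * ∑ j, p j * Real.log (p j) = T := by
    rw [hTdef]
    have : ∀ j, (∑ i, Real.exp ((u i - C j i) / γ)) = Z j := by
      intro j; rw [hZdef]
      exact Finset.sum_congr rfl (fun i _ => by rw [hCsym j i])
    simp_rw [this, mul_sub]
    rw [Finset.sum_sub_distrib, mul_sub]
  rw [hTval]
  have hre : ∀ π : Matrix (Fin n) (Fin n) ℝ,
      (∑ i, u i * (∑ j, π i j)) - ((∑ i, ∑ j, C i j * π i j)
        + γ * ∑ i, ∑ j, π i j * Real.log (π i j))
      = ∑ j, ∑ i, ((u i - C i j) * π i j - γ * (π i j * Real.log (π i j))) := by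
    intro π
    have h1 : ∑ i, u i * (∑ j, π i j) = ∑ j, ∑ i, u i * π i j := by
      simp_rw [Finset.mul_sum]; rw [Finset.sum_comm]
    have h2 : (∑ i, ∑ j, C i j * π i j) = ∑ j, ∑ i, C i j * π i j := by
      rw [Finset.sum_comm]
    have h3 : γ * ∑ i, ∑ j, π i j * Real.log (π i j)
        = ∑ j, ∑ i, γ * (π i j * Real.log (π i j)) := by
      rw [Finset.mul_sum]; simp_rw [Finset.mul_sum]; rw [Finset.sum_comm]
    rw [h1, h2, h3, ← Finset.sum_add_distrib, ← Finset.sum_sub_distrib]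
    exact Finset.sum_congr rfl fun j _ => by
      rw [← Finset.sum_add_distrib, ← Finset.sum_sub_distrib]
      exact Finset.sum_congr rfl fun i _ => by ring
  -- the general upper bound
  have hub : ∀ (π : Matrix (Fin n) (Fin n) ℝ), (∀ i j, 0 ≤ π i j) →
      (∀ j, ∑ i, π i j = p j) →
      (∑ i, u i * (∑ j, π i j)) - ((∑ i, ∑ j, C i j * π i j)
        + γ * ∑ i, ∑ j, π i j * Real.log (π i j)) ≤ T := by
    intro π hπ0 hπcol
    rw [hre π, hTdef, Finset.mul_sum]
    refine Finset.sum_le_sum (fun j _ => ?_)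
    have := key_ineq hγ (fun i => u i - C i j) (fun i => π i j) (p j) (hppos j)
      (fun i => hπ0 i j) (hπcol j)
    simpa [mul_assoc] using this
  -- the optimal coupling
  set π₀ : Matrix (Fin n) (Fin n) ℝ :=
    fun i j => p j * Real.exp ((u i - C i j) / γ) / Z j with hπ₀def
  have hπ₀0 : ∀ i j, 0 ≤ π₀ i j := fun i j =>
    div_nonneg (mul_nonneg (hppos j).le (Real.exp_pos _).le) (hZpos j).le
  have hπ₀col : ∀ j, ∑ i, π₀ i j = p j := by
    intro j
    rw [hπ₀def]
    simp only
    rw [← Finset.sum_div, ← Finset.mul_sum]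
    rw [mul_div_assoc, div_self (hZpos j).ne', mul_one]
  set q₀ : Fin n → ℝ := fun i => ∑ j, π₀ i j with hq₀def
  have hq₀0 : ∀ i, 0 ≤ q₀ i := fun i => Finset.sum_nonneg (fun j _ => hπ₀0 i j)
  have hq₀sum : ∑ i, q₀ i = 1 := by
    rw [hq₀def]
    simp only
    rw [Finset.sum_comm]
    refine (Finset.sum_congr rfl fun j _ => hπ₀col j).trans ?_
    exact hp.2
  -- value of the functional at π₀
  have hval : (∑ i, u i * (∑ j, π₀ i j)) - ((∑ i, ∑ j, C i j * π₀ i j)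
      + γ * ∑ i, ∑ j, π₀ i j * Real.log (π₀ i j)) = T := by
    rw [hre π₀, hTdef, Finset.mul_sum]
    refine Finset.sum_congr rfl (fun j _ => ?_)
    have := key_eq hn0 hγ (fun i => u i - C i j) (p j) (hppos j)
    simpa [mul_assoc] using this
  -- compute Wgamma at q₀
  have hπ₀mem : π₀ ∈ {π : Matrix (Fin n) (Fin n) ℝ | (∀ i j, 0 ≤ π i j) ∧
      (∀ i, ∑ j, π i j = q₀ i) ∧ (∀ j, ∑ i, π i j = p j)} :=
    ⟨hπ₀0, fun i => rfl, hπ₀col⟩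
  have hbdd : BddBelow ((fun π : Matrix (Fin n) (Fin n) ℝ =>
      (∑ i, ∑ j, C i j * π i j) + γ * ∑ i, ∑ j, π i j * Real.log (π i j)) ''
      {π | (∀ i j, 0 ≤ π i j) ∧ (∀ i, ∑ j, π i j = q₀ i) ∧ (∀ j, ∑ i, π i j = p j)}) := by
    refine ⟨(∑ i, u i * q₀ i) - T, ?_⟩
    rintro y ⟨π, ⟨hπ0, hπrow, hπcol⟩, rfl⟩
    have h := hub π hπ0 hπcol
    simp_rw [hπrow] at h
    simp only
    linarith
  have hW : Wgamma n C γ q₀ p = (∑ i, u i * q₀ i) - T := by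
    refine le_antisymm ?_ ?_
    · have hle := csInf_le hbdd ⟨π₀, hπ₀mem, rfl⟩
      have hval' : (∑ i, ∑ j, C i j * π₀ i j)
          + γ * ∑ i, ∑ j, π₀ i j * Real.log (π₀ i j) = (∑ i, u i * q₀ i) - T := by
        have : ∑ i, u i * q₀ i = ∑ i, u i * (∑ j, π₀ i j) := rfl
        rw [this]; linarith [hval]
      rw [Wgamma]
      calc sInf _ ≤ _ := hle
        _ = _ := hval'
    · rw [Wgamma]
      refine le_csInf ⟨_, ⟨π₀, hπ₀mem, rfl⟩⟩ ?_
      rintro y ⟨π, ⟨hπ0, hπrow, hπcol⟩, rfl⟩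
      have h := hub π hπ0 hπcol
      simp_rw [hπrow] at h
      simp only
      linarith
  constructor
  · exact ⟨q₀, ⟨hq₀0, hq₀sum⟩, by simp only [hW]; ring⟩
  · rintro v ⟨q, ⟨hq0, hqsum⟩, rfl⟩
    simp only
    -- feasible coupling q ⊗ p
    have hfeas : (fun i j => q i * p j) ∈ {π : Matrix (Fin n) (Fin n) ℝ |
        (∀ i j, 0 ≤ π i j) ∧ (∀ i, ∑ j, π i j = q i) ∧ (∀ j, ∑ i, π i j = p j)} := by
      refine ⟨fun i j => mul_nonneg (hq0 i) (hppos j).le, fun i => ?_, fun j => ?_⟩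
      · rw [← Finset.mul_sum, hp.2, mul_one]
      · rw [← Finset.sum_mul, hqsum, one_mul]
    have hWge : (∑ i, u i * q i) - T ≤ Wgamma n C γ q p := by
      rw [Wgamma]
      refine le_csInf ⟨_, ⟨_, hfeas, rfl⟩⟩ ?_
      rintro y ⟨π, ⟨hπ0, hπrow, hπcol⟩, rfl⟩
      have h := hub π hπ0 hπcol
      simp_rw [hπrow] at h
      simp only
      linarith
    linarith
end
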